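/- Let α ∈ ℝ and f(z1,z2)=g(z1)h(z2) with g,h ∈ D_α. Then f is cyclic in 𝔇_α if and only if g and h are both cyclic in D_α. -/

import Mathlib

open scoped ENNReal NNReal Classical
open Filter

/-- Weight `(k+1)^α` as an extended nonnegative real. -/
noncomputable def wt (α : ℝ) (k : ℕ) : ℝ≥0∞ := ((k : ℝ≥0∞) + 1) ^ α

/-- Squared norm of the Dirichlet-type space `𝔇_α` of the bidisk, at the level of
Taylor coefficients `a k l`. -/
noncomputable def Dnorm2 (α : ℝ) (a : ℕ → ℕ → ℂ) : ℝ≥0∞ :=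
  ∑' p : ℕ × ℕ, wt α p.1 * wt α p.2 * ((‖a p.1 p.2‖₊ : ℝ≥0∞)) ^ 2

/-- Squared norm of the one-variable Dirichlet-type space `D_α`. -/
noncomputable def dnorm2 (α : ℝ) (a : ℕ → ℂ) : ℝ≥0∞ :=
  ∑' k : ℕ, wt α k * ((‖a k‖₊ : ℝ≥0∞)) ^ 2

/-- Cauchy product (coefficients of the product of two power series in two variables). -/
noncomputable def conv2 (p a : ℕ → ℕ → ℂ) : ℕ → ℕ → ℂ := fun k l =>
  ∑ i ∈ Finset.range (k + 1), ∑ j ∈ Finset.range (l + 1), p i j * a (k - i) (l - j)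

/-- Cauchy product in one variable. -/
noncomputable def conv1 (p a : ℕ → ℂ) : ℕ → ℂ := fun k =>
  ∑ i ∈ Finset.range (k + 1), p i * a (k - i)

/-- Coefficients of the constant function `1` in two variables. -/
def one2 : ℕ → ℕ → ℂ := fun k l => if k = 0 ∧ l = 0 then 1 else 0

/-- Coefficients of the constant function `1` in one variable. -/
def one1 : ℕ → ℂ := fun k => if k = 0 then 1 else 0

/-- `p` is (the coefficient sequence of) a polynomial in `𝔓_n`. -/
def IsPoly2 (n : ℕ) (p : ℕ → ℕ → ℂ) : Prop := ∀ k l, n < k ∨ n < l → p k l = 0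

/-- `p` is a one-variable polynomial of degree at most `n`. -/
def IsPoly1 (n : ℕ) (p : ℕ → ℂ) : Prop := ∀ k, n < k → p k = 0

/-- Cyclicity of `a` in `𝔇_α`: some sequence of polynomials `p n` has `‖p n · f - 1‖_α → 0`. -/
def Cyclic2 (α : ℝ) (a : ℕ → ℕ → ℂ) : Prop :=
  ∃ p : ℕ → ℕ → ℕ → ℂ, (∀ n, ∃ m, IsPoly2 m (p n)) ∧
    Tendsto (fun n => Dnorm2 α (fun k l => conv2 (p n) a k l - one2 k l)) atTop (nhds 0)

/-- Cyclicity of `a` in the one-variable space `D_α`. -/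
def Cyclic1 (α : ℝ) (a : ℕ → ℂ) : Prop :=
  ∃ p : ℕ → ℕ → ℂ, (∀ n, ∃ m, IsPoly1 m (p n)) ∧
    Tendsto (fun n => dnorm2 α (fun k => conv1 (p n) a k - one1 k)) atTop (nhds 0)

/-- Squared distance `dist²_{𝔇_α}(1, f · 𝔓_n)`. -/
noncomputable def distP2 (α : ℝ) (n : ℕ) (a : ℕ → ℕ → ℂ) : ℝ≥0∞ :=
  ⨅ (p : ℕ → ℕ → ℂ) (_ : IsPoly2 n p), Dnorm2 α (fun k l => conv2 p a k l - one2 k l)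

-- auxiliary lemmas (to be inserted before stmt5)

lemma wt_zero (α : ℝ) : wt α 0 = 1 := by
  simp [wt]

lemma sq_norm_add_le (x y : ℂ) :
    ((‖x + y‖₊ : ℝ≥0∞)) ^ 2 ≤ 2 * (‖x‖₊ : ℝ≥0∞) ^ 2 + 2 * (‖y‖₊ : ℝ≥0∞) ^ 2 := by
  have h1 : ‖x + y‖₊ ≤ ‖x‖₊ + ‖y‖₊ := nnnorm_add_le x y
  have h2 : (‖x‖₊ + ‖y‖₊) ^ 2 ≤ 2 * ‖x‖₊ ^ 2 + 2 * ‖y‖₊ ^ 2 := by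
    have hr : ∀ s t : ℝ, (s + t) ^ 2 ≤ 2 * s ^ 2 + 2 * t ^ 2 := by
      intro s t; nlinarith [sq_nonneg (s - t)]
    rw [← NNReal.coe_le_coe]
    push_cast
    exact hr _ _
  have h3 : ‖x + y‖₊ ^ 2 ≤ 2 * ‖x‖₊ ^ 2 + 2 * ‖y‖₊ ^ 2 :=
    le_trans (pow_le_pow_left₀ zero_le h1 2) h2
  exact_mod_cast h3

lemma Dnorm2_add_le (α : ℝ) (u v : ℕ → ℕ → ℂ) :
    Dnorm2 α (fun k l => u k l + v k l) ≤ 2 * Dnorm2 α u + 2 * Dnorm2 α v := by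
  unfold Dnorm2
  rw [← ENNReal.tsum_mul_left, ← ENNReal.tsum_mul_left, ← ENNReal.tsum_add]
  refine ENNReal.tsum_le_tsum fun p => ?_
  calc wt α p.1 * wt α p.2 * ((‖u p.1 p.2 + v p.1 p.2‖₊ : ℝ≥0∞)) ^ 2
      ≤ wt α p.1 * wt α p.2 *
        (2 * (‖u p.1 p.2‖₊ : ℝ≥0∞) ^ 2 + 2 * (‖v p.1 p.2‖₊ : ℝ≥0∞) ^ 2) := by
        gcongr
        exact sq_norm_add_le _ _
    _ = 2 * (wt α p.1 * wt α p.2 * (‖u p.1 p.2‖₊ : ℝ≥0∞) ^ 2) +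
        2 * (wt α p.1 * wt α p.2 * (‖v p.1 p.2‖₊ : ℝ≥0∞) ^ 2) := by ring

lemma dnorm2_add_le (α : ℝ) (u v : ℕ → ℂ) :
    dnorm2 α (fun k => u k + v k) ≤ 2 * dnorm2 α u + 2 * dnorm2 α v := by
  unfold dnorm2
  rw [← ENNReal.tsum_mul_left, ← ENNReal.tsum_mul_left, ← ENNReal.tsum_add]
  refine ENNReal.tsum_le_tsum fun k => ?_
  calc wt α k * ((‖u k + v k‖₊ : ℝ≥0∞)) ^ 2
      ≤ wt α k * (2 * (‖u k‖₊ : ℝ≥0∞) ^ 2 + 2 * (‖v k‖₊ : ℝ≥0∞) ^ 2) := by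
        gcongr
        exact sq_norm_add_le _ _
    _ = 2 * (wt α k * (‖u k‖₊ : ℝ≥0∞) ^ 2) + 2 * (wt α k * (‖v k‖₊ : ℝ≥0∞) ^ 2) := by ring

lemma Dnorm2_sep (α : ℝ) (G H : ℕ → ℂ) :
    Dnorm2 α (fun k l => G k * H l) = dnorm2 α G * dnorm2 α H := by
  unfold Dnorm2 dnorm2
  rw [ENNReal.tsum_prod']
  rw [← ENNReal.tsum_mul_right]
  refine tsum_congr fun k => ?_
  rw [← ENNReal.tsum_mul_left]
  refine tsum_congr fun l => ?_
  have hn : (‖G k * H l‖₊ : ℝ≥0∞) = (‖G k‖₊ : ℝ≥0∞) * (‖H l‖₊ : ℝ≥0∞) := by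
    push_cast [nnnorm_mul]; ring
  rw [hn]
  ring

lemma dnorm2_one1 (α : ℝ) : dnorm2 α one1 = 1 := by
  unfold dnorm2
  rw [tsum_eq_single 0 (fun k hk => by simp [one1, hk])]
  simp [one1, wt_zero]

lemma dnorm2_slice1 (α : ℝ) (F : ℕ → ℕ → ℂ) :
    dnorm2 α (fun k => F k 0) ≤ Dnorm2 α F := by
  have hinj : Function.Injective (fun k : ℕ => ((k, 0) : ℕ × ℕ)) := by
    intro a b hab
    simpa using congrArg Prod.fst hab
  have := ENNReal.tsum_comp_le_tsum_of_injective hinj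
    (fun p : ℕ × ℕ => wt α p.1 * wt α p.2 * ((‖F p.1 p.2‖₊ : ℝ≥0∞)) ^ 2)
  unfold dnorm2 Dnorm2
  simpa [wt_zero] using this

lemma dnorm2_slice2 (α : ℝ) (F : ℕ → ℕ → ℂ) :
    dnorm2 α (fun l => F 0 l) ≤ Dnorm2 α F := by
  have hinj : Function.Injective (fun l : ℕ => ((0, l) : ℕ × ℕ)) := by
    intro a b hab
    simpa using congrArg Prod.snd hab
  have := ENNReal.tsum_comp_le_tsum_of_injective hinj
    (fun p : ℕ × ℕ => wt α p.1 * wt α p.2 * ((‖F p.1 p.2‖₊ : ℝ≥0∞)) ^ 2)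
  unfold dnorm2 Dnorm2
  simpa [wt_zero] using this

lemma cyclic1_of_mul_const (α : ℝ) (g : ℕ → ℂ) (c : ℂ)
    (hc : Cyclic1 α (fun k => g k * c)) : Cyclic1 α g := by
  obtain ⟨p, hp, ht⟩ := hc
  refine ⟨fun n i => c * p n i, fun n => ?_, ?_⟩
  · obtain ⟨m, hm⟩ := hp n
    exact ⟨m, fun k hk => by simp [hm k hk]⟩
  · have he : (fun n => dnorm2 α (fun k => conv1 (fun i => c * p n i) g k - one1 k)) =
        fun n => dnorm2 α (fun k => conv1 (p n) (fun k => g k * c) k - one1 k) := by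
      funext n
      congr 1
      funext k
      congr 1
      unfold conv1
      exact Finset.sum_congr rfl fun i _ => by ring
    rw [he]
    exact ht

lemma tendsto_squeeze_zero {f g : ℕ → ℝ≥0∞} (hg : Tendsto g atTop (nhds 0))
    (hle : ∀ n, f n ≤ g n) : Tendsto f atTop (nhds 0) :=
  tendsto_of_tendsto_of_tendsto_of_le_of_le tendsto_const_nhds hg
    (fun n => zero_le) hle

set_option maxHeartbeats 1000000 in
/-- a separable function is cyclic iff both factors are cyclic. -/
theorem stmt5 (α : ℝ) (g h : ℕ → ℂ) (hg : dnorm2 α g ≠ ⊤) (hh : dnorm2 α h ≠ ⊤) :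
    Cyclic2 α (fun k l => g k * h l) ↔ Cyclic1 α g ∧ Cyclic1 α h := by
  constructor
  · rintro ⟨p, hp, ht⟩
    constructor
    · apply cyclic1_of_mul_const α g (h 0)
      refine ⟨fun n i => p n i 0, fun n => ?_, ?_⟩
      · obtain ⟨m, hm⟩ := hp n
        exact ⟨m, fun k hk => hm k 0 (Or.inl hk)⟩
      · refine tendsto_squeeze_zero ht fun n => ?_
        have heq : (fun k => conv1 (fun i => p n i 0) (fun k => g k * h 0) k - one1 k)
            = fun k => conv2 (p n) (fun k l => g k * h l) k 0 - one2 k 0 := by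
          funext k
          have h1 : conv1 (fun i => p n i 0) (fun k => g k * h 0) k
              = conv2 (p n) (fun k l => g k * h l) k 0 := by
            simp only [conv2, conv1, Finset.sum_range_one, Nat.sub_zero, Nat.zero_add]
          have h2 : one1 k = one2 k 0 := by simp [one1, one2]
          rw [h1, h2]
        exact le_trans (le_of_eq (congrArg (dnorm2 α) heq)) (dnorm2_slice1 α (fun k l => conv2 (p n) (fun k l => g k * h l) k l - one2 k l))
    · apply cyclic1_of_mul_const α h (g 0)
      refine ⟨fun n j => p n 0 j, fun n => ?_, ?_⟩
      · obtain ⟨m, hm⟩ := hp n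
        exact ⟨m, fun l hl => hm 0 l (Or.inr hl)⟩
      · refine tendsto_squeeze_zero ht fun n => ?_
        have heq : (fun l => conv1 (fun j => p n 0 j) (fun l => h l * g 0) l - one1 l)
            = fun l => conv2 (p n) (fun k l => g k * h l) 0 l - one2 0 l := by
          funext l
          have h1 : conv1 (fun j => p n 0 j) (fun l => h l * g 0) l
              = conv2 (p n) (fun k l => g k * h l) 0 l := by
            simp only [conv2, conv1, Finset.sum_range_one, Nat.sub_zero, Nat.zero_add,
              Nat.sub_self]
            exact Finset.sum_congr rfl fun j _ => by ring
          have h2 : one1 l = one2 0 l := by simp [one1, one2]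
          rw [h1, h2]
        exact le_trans (le_of_eq (congrArg (dnorm2 α) heq)) (dnorm2_slice2 α (fun k l => conv2 (p n) (fun k l => g k * h l) k l - one2 k l))
  · rintro ⟨⟨p, hp, htp⟩, ⟨q, hq, htq⟩⟩
    set a : ℕ → ℝ≥0∞ := fun n => dnorm2 α (fun k => conv1 (p n) g k - one1 k) with ha
    set b : ℕ → ℝ≥0∞ := fun n => dnorm2 α (fun l => conv1 (q n) h l - one1 l) with hb
    refine ⟨fun n k l => p n k * q n l, fun n => ?_, ?_⟩
    · obtain ⟨m1, h1⟩ := hp n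
      obtain ⟨m2, h2⟩ := hq n
      refine ⟨max m1 m2, fun k l hkl => ?_⟩
      show p n k * q n l = 0
      rcases hkl with hk | hl
      · rw [h1 k (lt_of_le_of_lt (le_max_left m1 m2) hk), zero_mul]
      · rw [h2 l (lt_of_le_of_lt (le_max_right m1 m2) hl), mul_zero]
    · have hBbound : ∀ n, dnorm2 α (fun l => conv1 (q n) h l) ≤ 2 * b n + 2 := by
        intro n
        have hrw : (fun l => conv1 (q n) h l)
            = fun l => (conv1 (q n) h l - one1 l) + one1 l := by
          funext l; ring
        rw [hrw]
        calc dnorm2 α (fun l => (conv1 (q n) h l - one1 l) + one1 l)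
            ≤ 2 * b n + 2 * dnorm2 α one1 := dnorm2_add_le α _ _
          _ = 2 * b n + 2 := by rw [dnorm2_one1, mul_one]
      have key : ∀ n, Dnorm2 α (fun k l =>
            conv2 (fun k l => p n k * q n l) (fun k l => g k * h l) k l - one2 k l)
          ≤ 2 * (a n * (2 * b n + 2)) + 2 * b n := by
        intro n
        have hdecomp : (fun k l =>
              conv2 (fun k l => p n k * q n l) (fun k l => g k * h l) k l - one2 k l)
            = fun k l => (conv1 (p n) g k - one1 k) * conv1 (q n) h l
                + one1 k * (conv1 (q n) h l - one1 l) := by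
          funext k l
          have hc : conv2 (fun k l => p n k * q n l) (fun k l => g k * h l) k l
              = conv1 (p n) g k * conv1 (q n) h l := by
            simp only [conv2, conv1, Finset.sum_mul_sum]
            exact Finset.sum_congr rfl fun i _ => Finset.sum_congr rfl fun j _ => by ring
          have ho : one2 k l = one1 k * one1 l := by
            by_cases hk0 : k = 0 <;> by_cases hl0 : l = 0 <;> simp [one1, one2, hk0, hl0]
          rw [hc, ho]; ring
        rw [hdecomp]
        calc Dnorm2 α (fun k l => (conv1 (p n) g k - one1 k) * conv1 (q n) h l
                + one1 k * (conv1 (q n) h l - one1 l))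
            ≤ 2 * Dnorm2 α (fun k l => (conv1 (p n) g k - one1 k) * conv1 (q n) h l)
              + 2 * Dnorm2 α (fun k l => one1 k * (conv1 (q n) h l - one1 l)) :=
              Dnorm2_add_le α _ _
          _ = 2 * (a n * dnorm2 α (fun l => conv1 (q n) h l)) + 2 * (1 * b n) := by
              rw [Dnorm2_sep, Dnorm2_sep, dnorm2_one1]
          _ ≤ 2 * (a n * (2 * b n + 2)) + 2 * b n := by
              rw [one_mul]
              gcongr
              exact hBbound n
      refine tendsto_squeeze_zero ?_ key
      have h2top : (2 : ℝ≥0∞) ≠ ⊤ := by simp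
      have h2b : Tendsto (fun n => 2 * b n + 2) atTop (nhds 2) := by
        have t := (ENNReal.Tendsto.const_mul (a := 2) htq (Or.inr h2top)).add
          (tendsto_const_nhds (x := (2 : ℝ≥0∞)))
        simpa using t
      have hmul : Tendsto (fun n => a n * (2 * b n + 2)) atTop (nhds 0) := by
        have t := ENNReal.Tendsto.mul htp (Or.inr h2top) h2b (Or.inl two_ne_zero)
        simpa using t
      have t1 := ENNReal.Tendsto.const_mul (a := 2) hmul (Or.inr h2top)
      have t2 := ENNReal.Tendsto.const_mul (a := 2) htq (Or.inr h2top)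
      simpa using t1.add t2
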